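/- Let T, H, n ≥ 1 and 1 ≤ K ≤ H be integers and ε ∈ (0, 1) with ⌊ε(n + 1)⌋ ≥ 1. Let (X_1, Y_1), …, (X_{n+1}, Y_{n+1}) be random elements of ℝ^T × ℝ^H whose joint distribution is exchangeable (invariant under every permutation of the n + 1 indices). Let f : ℝ^T → ℝ^H be a measurable point predictor and σ_1, …, σ_H : ℝ^T → (0, ∞) measurable scaling functions. For each i define the non-conformity score α_i = K-max of the family (|Y_{i,1} − f(X_i)_1|/σ_1(X_i), …, |Y_{i,H} − f(X_i)_H|/σ_H(X_i)), where K-max denotes the K-th largest value counting multiplicity, and let q be the ⌊ε(n + 1)⌋-th largest value (counting multiplicity) among α_1, …, α_n. Then the JANET joint prediction region C(X_{n+1}) = (f(X_{n+1})_1 ± q·σ_1(X_{n+1})) × ⋯ × (f(X_{n+1})_H ± q·σ_H(X_{n+1})) controls the K-familywise error at level ε: P(#{j ∈ {1, …, H} : |Y_{n+1,j} − f(X_{n+1})_j| > q·σ_j(X_{n+1})} ≥ K) ≤ ε. -/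

import Mathlib

open MeasureTheory Finset
open scoped ENNReal

/-- The `k`-th largest value (counting multiplicity) of a finite family of reals,
with default value `0` when `k` is out of range. -/
noncomputable def kthLargest {ι : Type*} [Fintype ι] (f : ι → ℝ) (k : ℕ) : ℝ :=
  ((Finset.univ.val.map f).sort (· ≤ ·)).getD (Fintype.card ι - k) 0

lemma sorted_getD_le_iff {l : List ℝ} (hl : l.Pairwise (· ≤ ·)) {k : ℕ}
    (hk1 : 1 ≤ k) (hkN : k ≤ l.length) (c : ℝ) :
    c ≤ l.getD (l.length - k) 0 ↔ k ≤ l.countP (fun x => decide (c ≤ x)) := by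
  set N := l.length with hN
  have hd : N - k < N := by omega
  rw [List.getD_eq_getElem l 0 hd]
  constructor
  · intro h
    have hsplit := List.countP_append (p := fun x => decide (c ≤ x)) (l₁ := l.take (N - k)) (l₂ := l.drop (N - k))
    rw [List.take_append_drop] at hsplit
    have hdropall : (l.drop (N - k)).countP (fun x => decide (c ≤ x)) = (l.drop (N - k)).length := by
      rw [List.countP_eq_length]
      intro a ha
      obtain ⟨i, hi, rfl⟩ := List.mem_iff_getElem.mp ha
      rw [List.getElem_drop]
      simp only [decide_eq_true_eq]
      refine le_trans h ?_
      have := hl.rel_get_of_le (a := ⟨N - k, hd⟩) (b := ⟨N - k + i, by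
        have := hi; simp [List.length_drop] at this ⊢; omega⟩) (by simp)
      simpa using this
    have hlen : (l.drop (N - k)).length = k := by simp [List.length_drop]; omega
    omega
  · intro h
    by_contra hc
    push_neg at hc
    have hsplit := List.countP_append (p := fun x => decide (c ≤ x)) (l₁ := l.take (N - k + 1)) (l₂ := l.drop (N - k + 1))
    rw [List.take_append_drop] at hsplit
    have htake0 : (l.take (N - k + 1)).countP (fun x => decide (c ≤ x)) = 0 := by
      rw [List.countP_eq_zero]
      intro a ha
      obtain ⟨i, hi, rfl⟩ := List.mem_iff_getElem.mp ha
      simp only [List.length_take] at hi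
      rw [List.getElem_take]
      simp only [decide_eq_true_eq]
      push_neg
      refine lt_of_le_of_lt ?_ hc
      have := hl.rel_get_of_le (a := ⟨i, by omega⟩) (b := ⟨N - k, hd⟩) (by simp; omega)
      simpa using this
    have hdrople : (l.drop (N - k + 1)).countP (fun x => decide (c ≤ x)) ≤ k - 1 := by
      refine le_trans (List.countP_le_length (p := fun x => decide (c ≤ x))) ?_
      simp [List.length_drop]; omega
    omega

lemma le_kthLargest_iff {ι : Type*} [Fintype ι] (f : ι → ℝ) {k : ℕ}
    (hk1 : 1 ≤ k) (hkN : k ≤ Fintype.card ι) (c : ℝ) :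
    c ≤ kthLargest f k ↔ k ≤ (univ.filter fun i => c ≤ f i).card := by
  classical
  set l := ((Finset.univ.val.map f).sort (· ≤ ·)) with hl
  have hlen : l.length = Fintype.card ι := by simp [hl]
  have hsorted : l.Pairwise (· ≤ ·) := Multiset.pairwise_sort _ _
  have hcount : l.countP (fun x => decide (c ≤ x)) = (univ.filter fun i => c ≤ f i).card := by
    have h1 : (l : Multiset ℝ) = Finset.univ.val.map f := Multiset.sort_eq _ _
    have h2 : Multiset.countP (fun x => c ≤ x) (l : Multiset ℝ)
        = l.countP (fun x => decide (c ≤ x)) := by simp [Multiset.coe_countP]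
    rw [← h2, h1, Multiset.countP_map]
    rfl
  rw [kthLargest, ← hcount, ← hlen]
  exact sorted_getD_le_iff hsorted hk1 (by omega) c

lemma le_kthLargest_of_card {ι : Type*} [Fintype ι] (f : ι → ℝ) {k : ℕ}
    (hk1 : 1 ≤ k) (c : ℝ)
    (h : k ≤ (univ.filter fun i => c ≤ f i).card) :
    c ≤ kthLargest f k := by
  classical
  have hkN : k ≤ Fintype.card ι :=
    le_trans h (le_trans (Finset.card_filter_le _ _) (by simp))
  exact (le_kthLargest_iff f hk1 hkN c).mpr h

lemma lt_kthLargest_of_card {ι : Type*} [Fintype ι] (f : ι → ℝ) {k : ℕ}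
    (hk1 : 1 ≤ k) (c : ℝ)
    (h : k ≤ (univ.filter fun i => c < f i).card) :
    c < kthLargest f k := by
  classical
  have hne : (univ.filter fun i => c < f i).Nonempty := by
    rw [← Finset.card_pos]; omega
  obtain ⟨i₀, hi₀, hmin⟩ := Finset.exists_min_image _ f hne
  have hci₀ : c < f i₀ := by simpa using (Finset.mem_filter.mp hi₀).2
  have hsub : (univ.filter fun i => c < f i) ⊆ (univ.filter fun i => f i₀ ≤ f i) := by
    intro i hi
    simp only [Finset.mem_filter, Finset.mem_univ, true_and] at *
    exact hmin i (by simpa using hi)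
  have hcard : k ≤ (univ.filter fun i => f i₀ ≤ f i).card :=
    le_trans h (Finset.card_le_card hsub)
  exact lt_of_lt_of_le hci₀ (le_kthLargest_of_card f hk1 (f i₀) hcard)

/-- deterministic rank bound: at most `m` indices have at most `m` indices with
value at least theirs. -/
lemma card_rank_le {ι : Type*} [Fintype ι] (g : ι → ℝ) (m : ℕ) :
    (univ.filter fun i => (univ.filter fun i' => g i ≤ g i').card ≤ m).card ≤ m := by
  classical
  set S := (univ.filter fun i => (univ.filter fun i' => g i ≤ g i').card ≤ m) with hS
  rcases S.eq_empty_or_nonempty with h | h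
  · simp [h]
  · obtain ⟨i₀, hi₀, hmin⟩ := Finset.exists_min_image S g h
    have hsub : S ⊆ (univ.filter fun i' => g i₀ ≤ g i') := by
      intro i hi
      simp only [Finset.mem_filter, Finset.mem_univ, true_and]
      exact hmin i hi
    exact le_trans (Finset.card_le_card hsub) (Finset.mem_filter.mp hi₀).2

lemma measurable_card_filter {ι δ : Type*} [Fintype ι] [MeasurableSpace δ]
    (g : ι → δ → ℝ) (hg : ∀ i, Measurable (g i)) (h : δ → ℝ) (hh : Measurable h) :
    Measurable fun x => (univ.filter fun i => h x ≤ g i x).card := by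
  classical
  have heq : (fun x => (univ.filter fun i => h x ≤ g i x).card)
      = fun x => ∑ i : ι, if h x ≤ g i x then 1 else 0 := by
    funext x; rw [Finset.card_filter]
  rw [heq]
  exact Finset.measurable_sum _ fun i _ =>
    Measurable.ite (measurableSet_le hh (hg i)) measurable_const measurable_const

lemma measurable_kthLargest {ι : Type*} [Fintype ι] {k : ℕ}
    (hk1 : 1 ≤ k) (hkN : k ≤ Fintype.card ι) :
    Measurable fun v : ι → ℝ => kthLargest v k := by
  classical
  apply measurable_of_Ici
  intro c
  have heq : (fun v : ι → ℝ => kthLargest v k) ⁻¹' Set.Ici c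
      = (fun v : ι → ℝ => (univ.filter fun i => c ≤ v i).card) ⁻¹' Set.Ici k := by
    ext v
    simp only [Set.mem_preimage, Set.mem_Ici]
    exact le_kthLargest_iff _ hk1 hkN c
  rw [heq]
  exact (measurable_card_filter (ι := ι) (δ := ι → ℝ) (fun i v => v i)
    (fun i => measurable_pi_apply i) (fun _ => c) measurable_const) measurableSet_Ici

lemma card_filter_equiv {ι : Type*} [Fintype ι] (e : Equiv.Perm ι) (p : ι → Prop)
    [DecidablePred p] :
    (univ.filter fun i => p (e i)).card = (univ.filter p).card := by
  apply Finset.card_bij (fun a _ => e a)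
  · intro a ha; simp only [Finset.mem_filter, Finset.mem_univ, true_and] at ha ⊢; exact ha
  · intro a _ b _ h; exact e.injective h
  · intro b hb
    refine ⟨e.symm b, ?_, by simp⟩
    simp only [Finset.mem_filter, Finset.mem_univ, true_and, Equiv.apply_symm_apply] at hb ⊢
    exact hb

/-- JANET's exact finite-sample `K`-FWER control in the exchangeable (multiple
independent time series) setting: calibrating the `K`-max scaled-residual
non-conformity score on `n` exchangeable calibration series at the
`⌊ε(n+1)⌋`-th largest score yields a joint prediction region for the test series
(indexed by `Fin.last n`) in which at least `K` of the `H` future components are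
missed with probability at most `ε`. -/
theorem janet_kfwer_control
    {Ω : Type*} [MeasurableSpace Ω] (μ : Measure Ω) [IsProbabilityMeasure μ]
    (T H n : ℕ) (hT : 1 ≤ T) (hH : 1 ≤ H) (hn : 1 ≤ n)
    (K : ℕ) (hK : 1 ≤ K) (hKH : K ≤ H)
    (ε : ℝ) (hε : ε ∈ Set.Ioo (0 : ℝ) 1) (hfloor : 1 ≤ ⌊ε * ((n : ℝ) + 1)⌋₊)
    -- the histories and target trajectories of the n + 1 series
    (X : Fin (n + 1) → Ω → Fin T → ℝ) (Y : Fin (n + 1) → Ω → Fin H → ℝ)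
    (hX : ∀ i, Measurable (X i)) (hY : ∀ i, Measurable (Y i))
    -- exchangeability of the joint distribution of the n + 1 pairs
    (hexch : ∀ τ : Equiv.Perm (Fin (n + 1)),
      μ.map (fun ω => fun i : Fin (n + 1) => (X (τ i) ω, Y (τ i) ω)) =
        μ.map (fun ω => fun i : Fin (n + 1) => (X i ω, Y i ω)))
    -- the point predictor and the positive scaling functions
    (f : (Fin T → ℝ) → Fin H → ℝ) (hf : Measurable f)
    (σ : Fin H → (Fin T → ℝ) → ℝ)
    (hσmeas : ∀ j, Measurable (σ j)) (hσpos : ∀ j x, 0 < σ j x)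
    -- the K-max non-conformity scores
    (α : Fin (n + 1) → Ω → ℝ)
    (hα : ∀ i ω, α i ω =
      kthLargest (fun j : Fin H => |Y i ω j - f (X i ω) j| / σ j (X i ω)) K)
    -- the calibrated quantile: the ⌊ε(n+1)⌋-th largest score among α_1, …, α_n
    (q : Ω → ℝ)
    (hq : ∀ ω, q ω =
      kthLargest (fun i : Fin n => α i.castSucc ω) ⌊ε * ((n : ℝ) + 1)⌋₊) :
    μ {ω | K ≤ (Finset.univ.filter fun j : Fin H =>
        q ω * σ j (X (Fin.last n) ω) <
          |Y (Fin.last n) ω j - f (X (Fin.last n) ω) j|).card} ≤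
      ENNReal.ofReal ε := by
  classical
  obtain ⟨hε0, hε1⟩ := hε
  set m := ⌊ε * ((n : ℝ) + 1)⌋₊ with hm
  -- the score function
  set score : (Fin T → ℝ) × (Fin H → ℝ) → ℝ :=
    fun p => kthLargest (fun j : Fin H => |p.2 j - f p.1 j| / σ j p.1) K with hscore
  have hscoremeas : Measurable score := by
    apply (measurable_kthLargest hK (by simpa using hKH)).comp
    apply measurable_pi_lambda
    intro j
    exact Measurable.div
      (Measurable.abs (Measurable.sub ((measurable_pi_apply j).comp measurable_snd)
        ((measurable_pi_apply j).comp (hf.comp measurable_fst))))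
      ((hσmeas j).comp measurable_fst)
  have hαs : ∀ (i : Fin (n + 1)) ω, α i ω = score (X i ω, Y i ω) := fun i ω => hα i ω
  -- the bad set in sequence space
  set B : Set (Fin (n + 1) → (Fin T → ℝ) × (Fin H → ℝ)) :=
    {v | (univ.filter fun i => score (v (Fin.last n)) ≤ score (v i)).card ≤ m} with hB
  have hBmeas : MeasurableSet B := by
    have hmc := (measurable_card_filter (fun (i : Fin (n + 1))
        (v : Fin (n + 1) → (Fin T → ℝ) × (Fin H → ℝ)) => score (v i))
      (fun i => hscoremeas.comp (measurable_pi_apply i))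
      (fun v => score (v (Fin.last n)))
      (hscoremeas.comp (measurable_pi_apply _))) (measurableSet_Iic (a := m))
    exact hmc
  -- the rank events
  set A : Fin (n + 1) → Set Ω := fun i =>
    {ω | (univ.filter fun i' => α i ω ≤ α i' ω).card ≤ m} with hA
  have hApre : ∀ i : Fin (n + 1),
      A i = (fun ω => fun i' : Fin (n + 1) =>
        (X ((Equiv.swap i (Fin.last n)) i') ω, Y ((Equiv.swap i (Fin.last n)) i') ω)) ⁻¹' B := by
    intro i
    ext ω
    have h1 : (Equiv.swap i (Fin.last n)) (Fin.last n) = i := Equiv.swap_apply_right _ _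
    have h2 : (univ.filter fun i' => α i ω ≤ α ((Equiv.swap i (Fin.last n)) i') ω).card
        = (univ.filter fun i' => α i ω ≤ α i' ω).card :=
      card_filter_equiv (Equiv.swap i (Fin.last n)) (fun i' => α i ω ≤ α i' ω)
    simp only [hA, hB, Set.mem_setOf_eq, Set.mem_preimage, ← hαs, h1, h2]
  have hmeasτ : ∀ τ : Equiv.Perm (Fin (n + 1)),
      Measurable (fun ω => fun i' : Fin (n + 1) => (X (τ i') ω, Y (τ i') ω)) := fun τ =>
    measurable_pi_lambda _ fun i' => (hX (τ i')).prodMk (hY (τ i'))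
  have hAmeas : ∀ i, MeasurableSet (A i) := by
    intro i
    rw [hApre i]
    exact (hmeasτ _) hBmeas
  -- by exchangeability all rank events have the same probability
  have key : ∀ i : Fin (n + 1), μ (A i) =
      μ.map (fun ω => fun i : Fin (n + 1) => (X i ω, Y i ω)) B := by
    intro i
    rw [hApre i, ← Measure.map_apply (hmeasτ (Equiv.swap i (Fin.last n))) hBmeas,
      hexch (Equiv.swap i (Fin.last n))]
  -- the union bound on ranks
  have hsum : ∑ i : Fin (n + 1), μ (A i) ≤ (m : ℝ≥0∞) := by
    have h1 : ∀ i : Fin (n + 1), μ (A i)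
        = ∫⁻ ω, (A i).indicator (1 : Ω → ℝ≥0∞) ω ∂μ := by
      intro i
      exact (lintegral_indicator_one (hAmeas i)).symm
    calc ∑ i : Fin (n + 1), μ (A i)
        = ∫⁻ ω, ∑ i : Fin (n + 1), (A i).indicator (1 : Ω → ℝ≥0∞) ω ∂μ := by
          rw [lintegral_finset_sum]
          · exact Finset.sum_congr rfl fun i _ => h1 i
          · exact fun i _ => measurable_const.indicator (hAmeas i)
      _ ≤ ∫⁻ _, (m : ℝ≥0∞) ∂μ := by
          apply lintegral_mono
          intro ω
          show ∑ i : Fin (n + 1), (A i).indicator (1 : Ω → ℝ≥0∞) ω ≤ (m : ℝ≥0∞)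
          have h2 : ∑ i : Fin (n + 1), (A i).indicator (1 : Ω → ℝ≥0∞) ω
              = ((univ.filter fun i => ω ∈ A i).card : ℝ≥0∞) := by
            rw [Finset.card_filter]
            push_cast
            refine Finset.sum_congr rfl fun i _ => ?_
            by_cases h : ω ∈ A i <;> simp [Set.indicator_apply, h]
          rw [h2]
          have h3 : (univ.filter fun i => ω ∈ A i).card ≤ m := by
            have := card_rank_le (fun i : Fin (n + 1) => α i ω) m
            simpa [hA, Set.mem_setOf_eq] using this
          exact_mod_cast Nat.cast_le.mpr h3
      _ = (m : ℝ≥0∞) := by simp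
  -- hence P(A (last)) ≤ m / (n+1) ≤ ε
  have hAlast : ((n : ℝ≥0∞) + 1) * μ (A (Fin.last n)) ≤ (m : ℝ≥0∞) := by
    have : ∑ i : Fin (n + 1), μ (A i) = ((n : ℝ≥0∞) + 1) * μ (A (Fin.last n)) := by
      rw [Finset.sum_congr rfl fun i _ => (key i).trans (key (Fin.last n)).symm]
      rw [Finset.sum_const, Finset.card_univ, Fintype.card_fin, nsmul_eq_mul]
      push_cast
      ring
    rw [← this]
    exact hsum
  have hAε : μ (A (Fin.last n)) ≤ ENNReal.ofReal ε := by
    have hmle : (m : ℝ) ≤ ε * ((n : ℝ) + 1) := Nat.floor_le (by positivity)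
    have h4 : (m : ℝ≥0∞) ≤ ((n : ℝ≥0∞) + 1) * ENNReal.ofReal ε := by
      have : ((n : ℝ≥0∞) + 1) * ENNReal.ofReal ε = ENNReal.ofReal (((n : ℝ) + 1) * ε) := by
        rw [ENNReal.ofReal_mul (by positivity)]
        congr 1
        rw [ENNReal.ofReal_add (by positivity) zero_le_one]
        simp [ENNReal.ofReal_natCast]
      rw [this, ← ENNReal.ofReal_natCast m]
      exact ENNReal.ofReal_le_ofReal (by linarith)
    have h5 : ((n : ℝ≥0∞) + 1) * μ (A (Fin.last n)) ≤ ((n : ℝ≥0∞) + 1) * ENNReal.ofReal ε :=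
      le_trans hAlast h4
    rwa [ENNReal.mul_le_mul_iff_right (by simp) (by simp)] at h5
  -- the miss event is contained in the rank event for the test index
  refine le_trans (measure_mono ?_) hAε
  intro ω hω
  simp only [Set.mem_setOf_eq] at hω
  -- the test score exceeds q ω
  have hq_lt : q ω < α (Fin.last n) ω := by
    rw [hα]
    apply lt_kthLargest_of_card _ hK
    refine le_trans hω (le_of_eq ?_)
    apply Finset.card_bij (fun a _ => a) _ (fun a _ b _ h => h)
    · intro b hb
      refine ⟨b, ?_, rfl⟩
      simp only [Finset.mem_filter, Finset.mem_univ, true_and] at hb ⊢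
      exact (lt_div_iff₀ (hσpos b (X (Fin.last n) ω))).mp hb
    · intro a ha
      simp only [Finset.mem_filter, Finset.mem_univ, true_and] at ha ⊢
      exact (lt_div_iff₀ (hσpos a (X (Fin.last n) ω))).mpr ha
  -- at most m - 1 calibration scores are ≥ the test score
  have hcal : (univ.filter fun i : Fin n => α (Fin.last n) ω ≤ α i.castSucc ω).card ≤ m - 1 := by
    by_contra hcon
    push_neg at hcon
    have : m ≤ (univ.filter fun i : Fin n => α (Fin.last n) ω ≤ α i.castSucc ω).card := by omega
    have := le_kthLargest_of_card (fun i : Fin n => α i.castSucc ω) hfloor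
      (α (Fin.last n) ω) this
    rw [← hq ω] at this
    linarith
  -- hence the rank of the test score is at most m
  show (univ.filter fun i' => α (Fin.last n) ω ≤ α i' ω).card ≤ m
  have hsplit : (univ.filter fun i' : Fin (n + 1) => α (Fin.last n) ω ≤ α i' ω).card
      = (univ.filter fun i : Fin n => α (Fin.last n) ω ≤ α i.castSucc ω).card
        + (if α (Fin.last n) ω ≤ α (Fin.last n) ω then 1 else 0) := by
    rw [Finset.card_filter, Finset.card_filter,
      Fin.sum_univ_castSucc (f := fun i' : Fin (n + 1) =>
        if α (Fin.last n) ω ≤ α i' ω then 1 else 0)]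
  simp only [le_refl, if_true] at hsplit
  omega
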